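/- (Single-cluster lemma) Suppose 1 < k ≤ d. Define f(γ) = (−1)^{k−1} (∏_{i=1}^{k−1} λᵢ)^{−1} (γ − 1) ∏_{i=1}^{k−1} (γ − λᵢ). Then f(0) = −1, f(λ₁) = ⋯ = f(λ_{k−1}) = 0, and there exists z ∈ K_k(A, r₀) such that ‖r₀ − A z‖₂ ≤ ‖W‖₂ · ‖(f(λ_k), f(λ_{k+1}), …, f(λ_d))ᵀ‖₂. -/

import Mathlib

/-- The Euclidean (ℓ²) norm of a complex vector. -/
noncomputable def euclNorm {m : ℕ} (x : Fin m → ℂ) : ℝ :=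
  Real.sqrt (∑ t, ‖x t‖ ^ 2)

/-- The operator 2-norm of a complex matrix (induced by Euclidean norms). -/
noncomputable def l2OpNorm {m k : ℕ} (W : Matrix (Fin m) (Fin k) ℂ) : ℝ :=
  ‖LinearMap.toContinuousLinearMap (Matrix.toEuclideanLin W)‖

lemma euclNorm_eq_norm {m : ℕ} (x : Fin m → ℂ) :
    euclNorm x = ‖(WithLp.equiv 2 (Fin m → ℂ)).symm x‖ := by
  rw [EuclideanSpace.norm_eq, euclNorm]
  rfl

lemma euclNorm_mulVec_le {m k : ℕ} (W : Matrix (Fin m) (Fin k) ℂ) (x : Fin k → ℂ) :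
    euclNorm (W.mulVec x) ≤ l2OpNorm W * euclNorm x := by
  rw [euclNorm_eq_norm, euclNorm_eq_norm, l2OpNorm]
  have h := (LinearMap.toContinuousLinearMap (Matrix.toEuclideanLin W)).le_opNorm
    ((WithLp.equiv 2 (Fin k → ℂ)).symm x)
  simpa [Matrix.toEuclideanLin_apply_piLp_toLp] using h

lemma pow_mulVec_eig {n : ℕ} (A : Matrix (Fin n) (Fin n) ℂ) (w : Fin n → ℂ) (μ : ℂ)
    (h : A.mulVec w = μ • w) (j : ℕ) : (A ^ j).mulVec w = μ ^ j • w := by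
  induction j with
  | zero => simp [Matrix.one_mulVec]
  | succ j ih =>
    rw [pow_succ', ← Matrix.mulVec_mulVec, ih, Matrix.mulVec_smul, h, smul_smul, ← pow_succ]

lemma aeval_mulVec_eig {n : ℕ} (A : Matrix (Fin n) (Fin n) ℂ) (w : Fin n → ℂ) (μ : ℂ)
    (h : A.mulVec w = μ • w) (p : Polynomial ℂ) :
    (Polynomial.aeval A p).mulVec w = p.eval μ • w := by
  induction p using Polynomial.induction_on' with
  | add p q hp hq => simp [Matrix.add_mulVec, hp, hq, add_smul]
  | monomial j a =>
    rw [Polynomial.aeval_monomial, ← Matrix.mulVec_mulVec, pow_mulVec_eig A w μ h,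
      Algebra.algebraMap_eq_smul_one, Matrix.mulVec_smul, Matrix.smul_mulVec,
      Matrix.one_mulVec, Polynomial.eval_monomial, smul_comm, smul_smul]

/-- single-cluster lemma: for `1 < k ≤ d` and
`f(γ) = (−1)^{k−1} (∏_{i=1}^{k−1} λᵢ)⁻¹ (γ − 1) ∏_{i=1}^{k−1} (γ − λᵢ)`, we have
`f(0) = −1`, `f(λ₁) = ⋯ = f(λ_{k−1}) = 0`, and there is `z ∈ K_k(A, r₀)` with
`‖r₀ − A z‖₂ ≤ ‖W‖₂ ‖(f(λ_k),…,f(λ_d))ᵀ‖₂`. -/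
theorem gmres_single_cluster_residual_bound
    (n d : ℕ) (A : Matrix (Fin n) (Fin n) ℂ)
    (v : Fin d → (Fin n → ℂ)) (lam : Fin d → ℂ) (c : Fin d → ℂ)
    (hunit : ∀ i, euclNorm (v i) = 1)
    (heig : ∀ i, A.mulVec (v i) = lam i • v i)
    (hnz : ∀ i, lam i ≠ 0) (hdist : Function.Injective lam)
    (r₀ : Fin n → ℂ) (hr₀ : r₀ = ∑ i, c i • v i)
    (W : Matrix (Fin n) (Fin d) ℂ) (hW : W = Matrix.of fun t i => c i * v i t)
    (k : ℕ) (hk1 : 1 < k) (hkd : k ≤ d)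
    (f : ℂ → ℂ)
    (hf : f = fun x => (-1 : ℂ) ^ (k - 1) *
        (∏ i : Fin (k - 1), lam (Fin.castLE (by omega) i))⁻¹ *
          ((x - 1) * ∏ i : Fin (k - 1), (x - lam (Fin.castLE (by omega) i)))) :
    f 0 = -1 ∧ (∀ i : Fin (k - 1), f (lam (Fin.castLE (by omega) i)) = 0) ∧
      ∃ z ∈ Submodule.span ℂ (Set.range fun j : Fin k => (A ^ (j : ℕ)).mulVec r₀),
        euclNorm (r₀ - A.mulVec z) ≤
          l2OpNorm W *
            Real.sqrt (∑ i ∈ Finset.univ.filter (fun i : Fin d => k - 1 ≤ (i : ℕ)),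
              ‖f (lam i)‖ ^ 2) := by
  have hkd' : k - 1 ≤ d := by omega
  set L : Fin (k - 1) → ℂ := fun i => lam (Fin.castLE hkd' i) with hL
  have hfL : f = fun x => (-1 : ℂ) ^ (k - 1) * (∏ i, L i)⁻¹ *
      ((x - 1) * ∏ i : Fin (k - 1), (x - L i)) := hf
  have hprodne : (∏ i, L i) ≠ 0 := Finset.prod_ne_zero_iff.mpr fun i _ => hnz _
  -- part 1
  have hneg : (∏ i : Fin (k - 1), (0 - L i)) = (-1 : ℂ) ^ (k - 1) * ∏ i, L i := by
    calc ∏ i : Fin (k - 1), ((0 : ℂ) - L i)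
        = ∏ i : Fin (k - 1), ((-1 : ℂ) * L i) := Finset.prod_congr rfl fun i _ => by ring
      _ = (-1 : ℂ) ^ (k - 1) * ∏ i, L i := by
          rw [Finset.prod_mul_distrib, Finset.prod_const, Finset.card_univ, Fintype.card_fin]
  have hpow : ((-1 : ℂ)) ^ (k - 1) * (-1) ^ (k - 1) = 1 := by
    rw [← pow_add]
    exact Even.neg_one_pow ⟨k - 1, rfl⟩
  have h1 : f 0 = -1 := by
    rw [hfL]
    have key : (-1 : ℂ) ^ (k - 1) * (∏ i, L i)⁻¹ *
        (((0 : ℂ) - 1) * ∏ i : Fin (k - 1), ((0 : ℂ) - L i)) = -1 := by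
      rw [hneg]
      calc (-1 : ℂ) ^ (k - 1) * (∏ i, L i)⁻¹ *
            (((0 : ℂ) - 1) * ((-1 : ℂ) ^ (k - 1) * ∏ i, L i))
          = -(((-1 : ℂ) ^ (k - 1) * (-1) ^ (k - 1)) * ((∏ i, L i)⁻¹ * (∏ i, L i))) := by ring
        _ = -1 := by rw [hpow, inv_mul_cancel₀ hprodne]; norm_num
    exact key
  -- part 2
  have h2 : ∀ i : Fin (k - 1), f (lam (Fin.castLE hkd' i)) = 0 := by
    intro i
    have hz0 : (∏ j : Fin (k - 1), (lam (Fin.castLE hkd' i) - L j)) = 0 :=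
      Finset.prod_eq_zero (Finset.mem_univ i) (sub_self (L i))
    rw [hfL]
    simp only [hz0, mul_zero]
  refine ⟨h1, fun i => h2 i, ?_⟩
  -- polynomial setup
  set P : Polynomial ℂ := Polynomial.C ((-1 : ℂ) ^ (k - 1) * (∏ i, L i)⁻¹) *
      ((Polynomial.X - 1) * ∏ i : Fin (k - 1), (Polynomial.X - Polynomial.C (L i))) with hP
  have hPeval : ∀ x, P.eval x = f x := by
    intro x
    rw [hP, hfL]
    simp [Polynomial.eval_prod]
  have hPdeg : P.natDegree ≤ k := by
    refine le_trans (Polynomial.natDegree_mul_le) ?_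
    have hx1 : (Polynomial.X - 1 : Polynomial ℂ).natDegree = 1 := by
      simpa using Polynomial.natDegree_X_sub_C (1 : ℂ)
    have hpr : (∏ i : Fin (k - 1), (Polynomial.X - Polynomial.C (L i))).natDegree ≤ k - 1 := by
      refine le_trans (Polynomial.natDegree_prod_le _ _) ?_
      simp [Polynomial.natDegree_X_sub_C]
    have hmul : ((Polynomial.X - 1) *
        ∏ i : Fin (k - 1), (Polynomial.X - Polynomial.C (L i))).natDegree ≤ k := by
      refine le_trans Polynomial.natDegree_mul_le ?_
      rw [hx1]
      calc 1 + (∏ i : Fin (k - 1), (Polynomial.X - Polynomial.C (L i))).natDegree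
          ≤ 1 + (k - 1) := Nat.add_le_add_left hpr 1
        _ ≤ k := by omega
    rw [Polynomial.natDegree_C, zero_add]
    exact hmul
  have hP0 : P.eval 0 = -1 := by rw [hPeval]; exact h1
  have hdvd : Polynomial.X ∣ (P + 1) := by
    rw [Polynomial.X_dvd_iff]
    simp [Polynomial.coeff_zero_eq_eval_zero, hP0]
  obtain ⟨Q, hQ⟩ := hdvd
  have hQdeg : Q.natDegree < k := by
    by_cases hQ0 : Q = 0
    · rw [hQ0]; simp only [Polynomial.natDegree_zero]; omega
    · have hXQ : (Polynomial.X * Q).natDegree = 1 + Q.natDegree := by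
        rw [Polynomial.natDegree_mul Polynomial.X_ne_zero hQ0, Polynomial.natDegree_X]
      have hP1 : (P + 1).natDegree ≤ k := by
        refine le_trans (Polynomial.natDegree_add_le _ _) ?_
        simpa using hPdeg
      rw [← hQ] at hXQ
      omega
  -- z
  set z : Fin n → ℂ := (Polynomial.aeval A Q).mulVec r₀ with hz
  have hzsum : z = ∑ j ∈ Finset.range k, Q.coeff j • (A ^ j).mulVec r₀ := by
    rw [hz, Polynomial.aeval_eq_sum_range' hQdeg]
    rw [show ((∑ j ∈ Finset.range k, Q.coeff j • A ^ j).mulVec r₀)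
        = Matrix.mulVec.addMonoidHomLeft r₀ (∑ j ∈ Finset.range k, Q.coeff j • A ^ j) from rfl]
    rw [map_sum]
    exact Finset.sum_congr rfl fun j _ => by
      simp [Matrix.mulVec.addMonoidHomLeft, Matrix.smul_mulVec]
  have hzmem : z ∈ Submodule.span ℂ (Set.range fun j : Fin k => (A ^ (j : ℕ)).mulVec r₀) := by
    rw [hzsum]
    refine Submodule.sum_mem _ fun j hj => ?_
    refine Submodule.smul_mem _ _ (Submodule.subset_span ?_)
    exact ⟨⟨j, Finset.mem_range.mp hj⟩, rfl⟩
  refine ⟨z, hzmem, ?_⟩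
  -- residual
  have hres : r₀ - A.mulVec z = -((Polynomial.aeval A P).mulVec r₀) := by
    have hAz : A.mulVec z = (Polynomial.aeval A (P + 1)).mulVec r₀ := by
      rw [hQ, map_mul, Polynomial.aeval_X, ← Matrix.mulVec_mulVec, hz]
    rw [hAz, map_add, Matrix.add_mulVec, map_one, Matrix.one_mulVec]
    abel
  have haP : (Polynomial.aeval A P).mulVec r₀ = ∑ i, (f (lam i) * c i) • v i := by
    rw [hr₀]
    rw [show ((Polynomial.aeval A P).mulVec (∑ i, c i • v i))
        = (Polynomial.aeval A P).mulVecLin (∑ i, c i • v i) from rfl]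
    rw [map_sum]
    refine Finset.sum_congr rfl fun i _ => ?_
    rw [map_smul, Matrix.mulVecLin_apply, aeval_mulVec_eig A (v i) (lam i) (heig i) P,
      hPeval, smul_smul, mul_comm]
  classical
  set u : Fin d → ℂ := fun i => if k - 1 ≤ (i : ℕ) then f (lam i) else 0 with hu
  have hfzero : ∀ i : Fin d, (i : ℕ) < k - 1 → f (lam i) = 0 := by
    intro i hi
    have : i = Fin.castLE hkd' ⟨(i : ℕ), hi⟩ := by ext; rfl
    rw [this]
    exact h2 _
  have hWu : W.mulVec u = ∑ i, (f (lam i) * c i) • v i := by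
    funext t
    rw [hW]
    simp only [Matrix.mulVec, dotProduct, Matrix.of_apply, Finset.sum_apply,
      Pi.smul_apply, smul_eq_mul]
    refine Finset.sum_congr rfl fun i _ => ?_
    rw [hu]
    by_cases hi : k - 1 ≤ (i : ℕ)
    · simp [hi]; ring
    · simp [hi, hfzero i (by omega)]
  have hnormu : euclNorm u =
      Real.sqrt (∑ i ∈ Finset.univ.filter (fun i : Fin d => k - 1 ≤ (i : ℕ)), ‖f (lam i)‖ ^ 2) := by
    rw [euclNorm]
    congr 1
    rw [Finset.sum_filter]
    refine Finset.sum_congr rfl fun i _ => ?_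
    rw [hu]
    by_cases hi : k - 1 ≤ (i : ℕ) <;> simp [hi]
  have hfinal : r₀ - A.mulVec z = -(W.mulVec u) := by rw [hres, haP, hWu]
  rw [hfinal]
  have hnn : euclNorm (-(W.mulVec u)) = euclNorm (W.mulVec u) := by
    simp [euclNorm]
  rw [hnn, ← hnormu]
  exact euclNorm_mulVec_le W u
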